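/- Let 0 < α ≤ 1, y₀ ∈ ℝ, K > 0, T > 0, and let G = {(t,y) : t ∈ [0,T], |y−y₀| ≤ K}. Let f : G → ℝ be continuous and satisfy |f(t,y₁) − f(t,y₂)| ≤ L|y₁ − y₂| for some L > 0 and all (t,y₁),(t,y₂) ∈ G. Set M = sup_{(t,z)∈G} |f(t,z)| and let T* = T if M = 0 and T* = min{T, (KΓ(α+1)/M)^{1/α}} otherwise. Then there exists a unique continuous function y : [0,T*] → ℝ satisfying the Volterra integral equation y(t) = y₀ + (1/Γ(α)) ∫_0^t (t−s)^{α−1} f(s, y(s)) ds for all t ∈ [0,T*] (the integral formulation of the Caputo initial-value problem ᶜ_0 D^α y(t) = f(t,y(t)), y(0) = y₀). -/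

import Mathlib

open MeasureTheory intervalIntegral Set NNReal Filter

namespace CaputoAux

lemma ker_int {α : ℝ} (hα : 0 < α) (t a b : ℝ) :
    IntervalIntegrable (fun s => (t - s) ^ (α - 1)) volume a b := by
  have h : IntervalIntegrable (fun x : ℝ => x ^ (α - 1)) volume (t - a) (t - b) :=
    intervalIntegral.intervalIntegrable_rpow' (by linarith)
  simpa using h.comp_sub_left t

lemma ker_val2 {α : ℝ} (hα : 0 < α) (a c t : ℝ) :
    ∫ s in a..c, (t - s) ^ (α - 1) = ((t - a) ^ α - (t - c) ^ α) / α := by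
  rw [intervalIntegral.integral_comp_sub_left (fun x : ℝ => x ^ (α - 1)) t]
  rw [integral_rpow (Or.inl (by linarith))]
  ring_nf

lemma kg_int {α : ℝ} (hα : 0 < α) {g : ℝ → ℝ} {t a b : ℝ} (hg : ContinuousOn g (Set.uIcc a b)) :
    IntervalIntegrable (fun s => (t - s) ^ (α - 1) * g s) volume a b :=
  (ker_int hα t a b).mul_continuousOn hg

lemma ae_ne_point (c : ℝ) : ∀ᵐ s : ℝ ∂volume, s ≠ c := by
  refine ae_iff.2 ?_
  have : {a : ℝ | ¬a ≠ c} = {c} := by ext x; simp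
  rw [this]; exact measure_singleton c

lemma wt_bound {α : ℝ} (hα : 0 < α) {g h : ℝ → ℝ} {a t : ℝ} (hat : a ≤ t)
    (hgh : ∀ s ∈ Set.Ioo a t, |g s| ≤ h s)
    (hh0 : ∀ s ∈ Set.Ioo a t, 0 ≤ h s)
    (hint : IntervalIntegrable (fun s => (t - s) ^ (α - 1) * h s) volume a t) :
    |∫ s in a..t, (t - s) ^ (α - 1) * g s| ≤ ∫ s in a..t, (t - s) ^ (α - 1) * h s := by
  have hae : ∀ᵐ s ∂volume.restrict (Set.uIoc a t),
      ‖(t - s) ^ (α - 1) * g s‖ ≤ (t - s) ^ (α - 1) * h s := by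
    rw [Set.uIoc_of_le hat]
    filter_upwards [ae_restrict_of_ae (ae_ne_point t), ae_restrict_mem measurableSet_Ioc]
      with s hsne hs
    have hs' : s ∈ Set.Ioo a t := ⟨hs.1, lt_of_le_of_ne hs.2 hsne⟩
    have hk : 0 ≤ (t - s) ^ (α - 1) := Real.rpow_nonneg (by linarith [hs'.2]) _
    rw [Real.norm_eq_abs, abs_mul, abs_of_nonneg hk]
    exact mul_le_mul_of_nonneg_left (hgh s hs') hk
  have hnn : 0 ≤ ∫ s in a..t, (t - s) ^ (α - 1) * h s := by
    refine intervalIntegral.integral_nonneg_of_ae_restrict hat ?_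
    filter_upwards [ae_restrict_of_ae (ae_ne_point t), ae_restrict_of_ae (ae_ne_point a),
      ae_restrict_mem measurableSet_Icc] with s h1 h2 hs
    have hs' : s ∈ Set.Ioo a t := ⟨lt_of_le_of_ne hs.1 (Ne.symm h2), lt_of_le_of_ne hs.2 h1⟩
    exact mul_nonneg (Real.rpow_nonneg (by linarith [hs'.2]) _) (hh0 s hs')
  have := intervalIntegral.norm_integral_le_abs_of_norm_le hae hint
  rw [Real.norm_eq_abs, abs_of_nonneg hnn] at this
  exact this

lemma const_bound {α : ℝ} (hα : 0 < α) {g : ℝ → ℝ} {C a t : ℝ} (hat : a ≤ t) (hC : 0 ≤ C)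
    (hgh : ∀ s ∈ Set.Ioo a t, |g s| ≤ C) :
    |∫ s in a..t, (t - s) ^ (α - 1) * g s| ≤ C * (t - a) ^ α / α := by
  have h1 : |∫ s in a..t, (t - s) ^ (α - 1) * g s| ≤ ∫ s in a..t, (t - s) ^ (α - 1) * C :=
    wt_bound hα hat hgh (fun s _ => hC) ((ker_int hα t a t).mul_const C)
  have h2 : ∫ s in a..t, (t - s) ^ (α - 1) * C = C * (t - a) ^ α / α := by
    rw [intervalIntegral.integral_mul_const, ker_val2 hα]
    rw [sub_self, Real.zero_rpow (by linarith), sub_zero]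
    ring
  rw [h2] at h1; exact h1

lemma rpow_subadd {α x y : ℝ} (hα0 : 0 ≤ α) (hα1 : α ≤ 1) (hx : 0 ≤ x) (hy : 0 ≤ y) :
    (x + y) ^ α ≤ x ^ α + y ^ α := by
  have h := NNReal.rpow_add_le_add_rpow x.toNNReal y.toNNReal hα0 hα1
  have hxy : ((x.toNNReal + y.toNNReal : ℝ≥0) : ℝ) = x + y := by
    push_cast [Real.coe_toNNReal x hx, Real.coe_toNNReal y hy]; ring
  calc (x + y) ^ α = (((x.toNNReal + y.toNNReal : ℝ≥0) : ℝ)) ^ α := by rw [hxy]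
    _ = (((x.toNNReal + y.toNNReal) ^ α : ℝ≥0) : ℝ) := by rw [NNReal.coe_rpow]
    _ ≤ ((x.toNNReal ^ α + y.toNNReal ^ α : ℝ≥0) : ℝ) := by exact_mod_cast h
    _ = x ^ α + y ^ α := by
        push_cast [NNReal.coe_rpow, Real.coe_toNNReal x hx, Real.coe_toNNReal y hy]
        ring

lemma frac_holder {α : ℝ} (hα : 0 < α) (hα1 : α ≤ 1) {g : ℝ → ℝ} {C b : ℝ} (hC : 0 ≤ C)
    (hg : ContinuousOn g (Set.Icc 0 b)) (hgb : ∀ s ∈ Set.Icc 0 b, |g s| ≤ C)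
    {t₁ t₂ : ℝ} (h0 : 0 ≤ t₁) (h12 : t₁ ≤ t₂) (h2b : t₂ ≤ b) :
    |(∫ s in (0:ℝ)..t₂, (t₂ - s) ^ (α - 1) * g s) -
      ∫ s in (0:ℝ)..t₁, (t₁ - s) ^ (α - 1) * g s| ≤ 2 * C * (t₂ - t₁) ^ α / α := by
  have hsub1 : Set.uIcc (0:ℝ) t₁ ⊆ Set.Icc 0 b := by
    rw [Set.uIcc_of_le h0]; exact Set.Icc_subset_Icc le_rfl (by linarith)
  have hsub2 : Set.uIcc t₁ t₂ ⊆ Set.Icc 0 b := by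
    rw [Set.uIcc_of_le h12]; exact Set.Icc_subset_Icc h0 h2b
  have hi1 : IntervalIntegrable (fun s => (t₂ - s) ^ (α - 1) * g s) volume 0 t₁ :=
    kg_int hα (hg.mono hsub1)
  have hi2 : IntervalIntegrable (fun s => (t₂ - s) ^ (α - 1) * g s) volume t₁ t₂ :=
    kg_int hα (hg.mono hsub2)
  have hi3 : IntervalIntegrable (fun s => (t₁ - s) ^ (α - 1) * g s) volume 0 t₁ :=
    kg_int hα (hg.mono hsub1)
  have hsplit : (∫ s in (0:ℝ)..t₂, (t₂ - s) ^ (α - 1) * g s) =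
      (∫ s in (0:ℝ)..t₁, (t₂ - s) ^ (α - 1) * g s) +
        ∫ s in t₁..t₂, (t₂ - s) ^ (α - 1) * g s :=
    (intervalIntegral.integral_add_adjacent_intervals hi1 hi2).symm
  have hB : |∫ s in t₁..t₂, (t₂ - s) ^ (α - 1) * g s| ≤ C * (t₂ - t₁) ^ α / α := by
    refine const_bound hα h12 hC ?_
    intro s hs; exact hgb s ⟨by linarith [hs.1], by linarith [hs.2]⟩
  have hadd : t₂ ^ α ≤ t₁ ^ α + (t₂ - t₁) ^ α := by
    have := rpow_subadd (le_of_lt hα) hα1 h0 (by linarith : (0:ℝ) ≤ t₂ - t₁)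
    simpa using this
  have hA : |(∫ s in (0:ℝ)..t₁, (t₂ - s) ^ (α - 1) * g s) -
      ∫ s in (0:ℝ)..t₁, (t₁ - s) ^ (α - 1) * g s| ≤ C * (t₂ - t₁) ^ α / α := by
    rw [← intervalIntegral.integral_sub hi1 hi3]
    have hφint : IntervalIntegrable
        (fun s => C * ((t₁ - s) ^ (α - 1) - (t₂ - s) ^ (α - 1))) volume 0 t₁ :=
      (((ker_int hα t₁ 0 t₁).sub (ker_int hα t₂ 0 t₁)).const_mul C)
    have hae : ∀ᵐ s ∂volume.restrict (Set.uIoc (0:ℝ) t₁),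
        ‖(t₂ - s) ^ (α - 1) * g s - (t₁ - s) ^ (α - 1) * g s‖ ≤
          C * ((t₁ - s) ^ (α - 1) - (t₂ - s) ^ (α - 1)) := by
      rw [Set.uIoc_of_le h0]
      filter_upwards [ae_restrict_of_ae (ae_ne_point t₁), ae_restrict_mem measurableSet_Ioc]
        with s hsne hs
      have hst1 : s < t₁ := lt_of_le_of_ne hs.2 hsne
      have hk21 : (t₂ - s) ^ (α - 1) ≤ (t₁ - s) ^ (α - 1) :=
        Real.rpow_le_rpow_of_nonpos (by linarith) (by linarith) (by linarith)
      have habs : |g s| ≤ C := hgb s ⟨le_of_lt hs.1, by linarith⟩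
      have habsg : 0 ≤ |g s| := abs_nonneg _
      rw [Real.norm_eq_abs, ← sub_mul, abs_mul,
        abs_of_nonpos (by linarith : (t₂ - s) ^ (α - 1) - (t₁ - s) ^ (α - 1) ≤ 0)]
      have : -((t₂ - s) ^ (α - 1) - (t₁ - s) ^ (α - 1)) * |g s| ≤
          ((t₁ - s) ^ (α - 1) - (t₂ - s) ^ (α - 1)) * C := by
        rw [neg_sub]
        exact mul_le_mul_of_nonneg_left habs (by linarith)
      linarith [this]
    have h1 := intervalIntegral.norm_integral_le_abs_of_norm_le hae hφint
    rw [Real.norm_eq_abs] at h1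
    have hval : (∫ s in (0:ℝ)..t₁, C * ((t₁ - s) ^ (α - 1) - (t₂ - s) ^ (α - 1))) =
        C * ((t₁ ^ α - (t₂ ^ α - (t₂ - t₁) ^ α)) / α) := by
      rw [intervalIntegral.integral_const_mul,
        intervalIntegral.integral_sub (ker_int hα t₁ 0 t₁) (ker_int hα t₂ 0 t₁),
        ker_val2 hα, ker_val2 hα]
      rw [sub_self, Real.zero_rpow (by linarith), sub_zero, sub_zero, sub_zero]
      ring
    rw [hval] at h1
    have hmono : t₁ ^ α ≤ t₂ ^ α := Real.rpow_le_rpow h0 h12 (le_of_lt hα)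
    have hpos : 0 ≤ C * ((t₁ ^ α - (t₂ ^ α - (t₂ - t₁) ^ α)) / α) := by
      apply mul_nonneg hC
      apply div_nonneg _ (le_of_lt hα)
      have h1' : (0:ℝ) ≤ (t₂ - t₁) ^ α := Real.rpow_nonneg (by linarith) _
      linarith
    refine (h1.trans (le_of_eq (abs_of_nonneg hpos))).trans ?_
    have hnum : t₁ ^ α - (t₂ ^ α - (t₂ - t₁) ^ α) ≤ (t₂ - t₁) ^ α := by linarith
    have hstep : (t₁ ^ α - (t₂ ^ α - (t₂ - t₁) ^ α)) / α ≤ (t₂ - t₁) ^ α / α :=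
      div_le_div_of_nonneg_right hnum hα.le
    calc C * ((t₁ ^ α - (t₂ ^ α - (t₂ - t₁) ^ α)) / α) ≤ C * ((t₂ - t₁) ^ α / α) :=
          mul_le_mul_of_nonneg_left hstep hC
      _ = C * (t₂ - t₁) ^ α / α := by ring
  have hfinal : |(∫ s in (0:ℝ)..t₂, (t₂ - s) ^ (α - 1) * g s) -
      ∫ s in (0:ℝ)..t₁, (t₁ - s) ^ (α - 1) * g s| ≤
      |(∫ s in (0:ℝ)..t₁, (t₂ - s) ^ (α - 1) * g s) -
        ∫ s in (0:ℝ)..t₁, (t₁ - s) ^ (α - 1) * g s| +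
      |∫ s in t₁..t₂, (t₂ - s) ^ (α - 1) * g s| := by
    rw [hsplit]
    have : (∫ s in (0:ℝ)..t₁, (t₂ - s) ^ (α - 1) * g s) +
        (∫ s in t₁..t₂, (t₂ - s) ^ (α - 1) * g s) -
        ∫ s in (0:ℝ)..t₁, (t₁ - s) ^ (α - 1) * g s =
        ((∫ s in (0:ℝ)..t₁, (t₂ - s) ^ (α - 1) * g s) -
          ∫ s in (0:ℝ)..t₁, (t₁ - s) ^ (α - 1) * g s) +
        ∫ s in t₁..t₂, (t₂ - s) ^ (α - 1) * g s := by ring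
    rw [this]
    exact abs_add_le _ _
  calc _ ≤ _ := hfinal
    _ ≤ C * (t₂ - t₁) ^ α / α + C * (t₂ - t₁) ^ α / α := add_le_add hA hB
    _ = 2 * C * (t₂ - t₁) ^ α / α := by ring

lemma frac_cont {α : ℝ} (hα : 0 < α) (hα1 : α ≤ 1) {g : ℝ → ℝ} {C b : ℝ} (hC : 0 ≤ C)
    (hg : ContinuousOn g (Set.Icc 0 b)) (hgb : ∀ s ∈ Set.Icc 0 b, |g s| ≤ C) :
    ContinuousOn (fun t => ∫ s in (0:ℝ)..t, (t - s) ^ (α - 1) * g s) (Set.Icc 0 b) := by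
  set D : ℝ := 2 * C / α + 1 with hD
  have hD0 : 0 < D := by positivity
  have key : ∀ x ∈ Set.Icc 0 b, ∀ y ∈ Set.Icc 0 b,
      |(∫ s in (0:ℝ)..y, (y - s) ^ (α - 1) * g s) -
        ∫ s in (0:ℝ)..x, (x - s) ^ (α - 1) * g s| ≤ D * |y - x| ^ α := by
    intro x hx y hy
    rcases le_total x y with hxy | hxy
    · have := frac_holder hα hα1 hC hg hgb hx.1 hxy hy.2
      refine this.trans ?_
      rw [abs_of_nonneg (by linarith : (0:ℝ) ≤ y - x)]
      have h1 : (0:ℝ) ≤ (y - x) ^ α := Real.rpow_nonneg (by linarith) _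
      rw [hD]
      calc 2 * C * (y - x) ^ α / α = (2 * C / α) * (y - x) ^ α := by ring
        _ ≤ (2 * C / α + 1) * (y - x) ^ α := by nlinarith [h1]
    · have := frac_holder hα hα1 hC hg hgb hy.1 hxy hx.2
      rw [abs_sub_comm]
      refine this.trans ?_
      rw [abs_of_nonpos (by linarith : y - x ≤ 0)]
      have h1 : (0:ℝ) ≤ (x - y) ^ α := Real.rpow_nonneg (by linarith) _
      have hxy' : -(y - x) = x - y := by ring
      rw [hxy', hD]
      calc 2 * C * (x - y) ^ α / α = (2 * C / α) * (x - y) ^ α := by ring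
        _ ≤ (2 * C / α + 1) * (x - y) ^ α := by nlinarith [h1]
  intro x hx
  rw [Metric.continuousWithinAt_iff]
  intro ε hε
  refine ⟨(ε / D) ^ (1 / α), Real.rpow_pos_of_pos (by positivity) _, ?_⟩
  intro y hy hdist
  have h1 : |y - x| ^ α < ((ε / D) ^ (1 / α)) ^ α := by
    apply Real.rpow_lt_rpow (abs_nonneg _) _ hα
    rwa [Real.dist_eq] at hdist
  rw [one_div, Real.rpow_inv_rpow (by positivity) (ne_of_gt hα)] at h1
  have h2 := key x hx y hy
  rw [Real.dist_eq]
  calc |(∫ s in (0:ℝ)..y, (y - s) ^ (α - 1) * g s) -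
        ∫ s in (0:ℝ)..x, (x - s) ^ (α - 1) * g s| ≤ D * |y - x| ^ α := h2
    _ < D * (ε / D) := by exact mul_lt_mul_of_pos_left h1 hD0
    _ = ε := by field_simp

lemma biel {α : ℝ} (hα : 0 < α) (hα1 : α ≤ 1) {Tb δ lam t : ℝ} (hδ : 0 < δ) (hlam : 0 ≤ lam)
    (ht : 0 ≤ t) (htT : t ≤ Tb) :
    ∫ s in (0:ℝ)..t, (t - s) ^ (α - 1) * Real.exp (lam * s) ≤
      (δ ^ α / α + Tb * δ ^ (α - 1) * Real.exp (-(lam * δ))) * Real.exp (lam * t) := by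
  have hexp : Continuous fun s : ℝ => Real.exp (lam * s) :=
    Real.continuous_exp.comp (continuous_const.mul continuous_id)
  have hTb : 0 ≤ Tb := le_trans ht htT
  have hbase : ∀ a : ℝ, 0 ≤ a → a ≤ t →
      |∫ s in a..t, (t - s) ^ (α - 1) * Real.exp (lam * s)| ≤
        Real.exp (lam * t) * (t - a) ^ α / α := by
    intro a ha hat
    have h1 : |∫ s in a..t, (t - s) ^ (α - 1) * Real.exp (lam * s)| ≤
        ∫ s in a..t, (t - s) ^ (α - 1) * Real.exp (lam * t) := by
      refine wt_bound hα hat ?_ (fun s _ => (Real.exp_pos _).le)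
        ((ker_int hα t a t).mul_const _)
      intro s hs
      rw [abs_of_pos (Real.exp_pos _)]
      exact Real.exp_le_exp.2 (mul_le_mul_of_nonneg_left hs.2.le hlam)
    refine h1.trans ?_
    rw [intervalIntegral.integral_mul_const, ker_val2 hα, sub_self,
      Real.zero_rpow (by linarith), sub_zero]
    ring_nf
    exact le_rfl
  rcases le_total t δ with hcase | hcase
  · have h1 := hbase 0 le_rfl ht
    have h2 : Real.exp (lam * t) * (t - 0) ^ α / α ≤ δ ^ α / α * Real.exp (lam * t) := by
      rw [sub_zero]
      have : t ^ α ≤ δ ^ α := Real.rpow_le_rpow ht hcase hα.le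
      rw [div_mul_eq_mul_div, mul_comm (δ ^ α) _]
      apply div_le_div_of_nonneg_right _ hα.le
      exact mul_le_mul_of_nonneg_left this (Real.exp_pos _).le
    have h3 : 0 ≤ Tb * δ ^ (α - 1) * Real.exp (-(lam * δ)) * Real.exp (lam * t) := by positivity
    calc ∫ s in (0:ℝ)..t, (t - s) ^ (α - 1) * Real.exp (lam * s)
        ≤ |∫ s in (0:ℝ)..t, (t - s) ^ (α - 1) * Real.exp (lam * s)| := le_abs_self _
      _ ≤ Real.exp (lam * t) * (t - 0) ^ α / α := h1
      _ ≤ δ ^ α / α * Real.exp (lam * t) := h2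
      _ ≤ (δ ^ α / α + Tb * δ ^ (α - 1) * Real.exp (-(lam * δ))) * Real.exp (lam * t) := by
          nlinarith [h3]
  · set c : ℝ := t - δ with hc
    have hc0 : 0 ≤ c := by simp [hc]; linarith
    have hct : c ≤ t := by simp [hc]; linarith
    have hi1 : IntervalIntegrable (fun s => (t - s) ^ (α - 1) * Real.exp (lam * s)) volume 0 c :=
      kg_int hα (hexp.continuousOn)
    have hi2 : IntervalIntegrable (fun s => (t - s) ^ (α - 1) * Real.exp (lam * s)) volume c t :=
      kg_int hα (hexp.continuousOn)
    have hsplit : (∫ s in (0:ℝ)..t, (t - s) ^ (α - 1) * Real.exp (lam * s)) =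
        (∫ s in (0:ℝ)..c, (t - s) ^ (α - 1) * Real.exp (lam * s)) +
          ∫ s in c..t, (t - s) ^ (α - 1) * Real.exp (lam * s) :=
      (intervalIntegral.integral_add_adjacent_intervals hi1 hi2).symm
    have hP2 : |∫ s in c..t, (t - s) ^ (α - 1) * Real.exp (lam * s)| ≤
        Real.exp (lam * t) * δ ^ α / α := by
      have := hbase c hc0 hct
      simpa [hc] using this
    have hP1 : |∫ s in (0:ℝ)..c, (t - s) ^ (α - 1) * Real.exp (lam * s)| ≤
        δ ^ (α - 1) * Real.exp (lam * c) * Tb := by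
      have hbd : ∀ s ∈ Set.uIoc (0:ℝ) c,
          ‖(t - s) ^ (α - 1) * Real.exp (lam * s)‖ ≤ δ ^ (α - 1) * Real.exp (lam * c) := by
        intro s hs
        rw [Set.uIoc_of_le hc0] at hs
        have hks : (t - s) ^ (α - 1) ≤ δ ^ (α - 1) :=
          Real.rpow_le_rpow_of_nonpos hδ (by simp [hc] at *; linarith [hs.2]) (by linarith)
        have hknn : 0 ≤ (t - s) ^ (α - 1) := Real.rpow_nonneg (by linarith [hs.2, hδ]) _
        have hes : Real.exp (lam * s) ≤ Real.exp (lam * c) :=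
          Real.exp_le_exp.2 (mul_le_mul_of_nonneg_left hs.2 hlam)
        rw [Real.norm_eq_abs, abs_mul, abs_of_nonneg hknn, abs_of_pos (Real.exp_pos _)]
        exact mul_le_mul hks hes (Real.exp_pos _).le (Real.rpow_nonneg hδ.le _)
      have := intervalIntegral.norm_integral_le_of_norm_le_const hbd
      rw [Real.norm_eq_abs] at this
      refine this.trans ?_
      rw [sub_zero, abs_of_nonneg hc0]
      exact mul_le_mul_of_nonneg_left (by linarith : c ≤ Tb) (by positivity)
    have hec : Real.exp (lam * c) = Real.exp (lam * t) * Real.exp (-(lam * δ)) := by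
      rw [← Real.exp_add]; congr 1; rw [hc]; ring
    calc (∫ s in (0:ℝ)..t, (t - s) ^ (α - 1) * Real.exp (lam * s))
        = _ + _ := hsplit
      _ ≤ |∫ s in (0:ℝ)..c, (t - s) ^ (α - 1) * Real.exp (lam * s)| +
          |∫ s in c..t, (t - s) ^ (α - 1) * Real.exp (lam * s)| :=
            add_le_add (le_abs_self _) (le_abs_self _)
      _ ≤ δ ^ (α - 1) * Real.exp (lam * c) * Tb + Real.exp (lam * t) * δ ^ α / α :=
            add_le_add hP1 hP2
      _ = (δ ^ α / α + Tb * δ ^ (α - 1) * Real.exp (-(lam * δ))) * Real.exp (lam * t) := by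
            rw [hec]; ring

end CaputoAux
open CaputoAux

/-- Existence and uniqueness of a continuous solution of the Volterra integral equation
equivalent to the Caputo initial-value problem `ᶜ₀D^α y = f(t, y)`, `y(0) = y₀`. -/
theorem caputo_ivp_existence_uniqueness
    (α : ℝ) (hα : 0 < α ∧ α ≤ 1) (y₀ K T L : ℝ) (hK : 0 < K) (hT : 0 < T) (hL : 0 < L)
    (G : Set (ℝ × ℝ)) (hG : G = {p : ℝ × ℝ | p.1 ∈ Set.Icc 0 T ∧ |p.2 - y₀| ≤ K})
    (f : ℝ → ℝ → ℝ)
    (hf : ContinuousOn (fun p : ℝ × ℝ => f p.1 p.2) G)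
    (hlip : ∀ t y₁ y₂, (t, y₁) ∈ G → (t, y₂) ∈ G → |f t y₁ - f t y₂| ≤ L * |y₁ - y₂|)
    (M : ℝ) (hM : M = sSup ((fun p : ℝ × ℝ => |f p.1 p.2|) '' G))
    (Tstar : ℝ)
    (hTs : Tstar = if M = 0 then T else min T ((K * Real.Gamma (α + 1) / M) ^ (1 / α))) :
    ∃ y : ℝ → ℝ,
      (ContinuousOn y (Set.Icc 0 Tstar) ∧
        (∀ t ∈ Set.Icc 0 Tstar, |y t - y₀| ≤ K) ∧
        (∀ t ∈ Set.Icc 0 Tstar,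
          y t = y₀ + (1 / Real.Gamma α) * ∫ s in (0 : ℝ)..t, (t - s) ^ (α - 1) * f s (y s))) ∧
      ∀ z : ℝ → ℝ,
        (ContinuousOn z (Set.Icc 0 Tstar) ∧
          (∀ t ∈ Set.Icc 0 Tstar, |z t - y₀| ≤ K) ∧
          (∀ t ∈ Set.Icc 0 Tstar,
            z t = y₀ + (1 / Real.Gamma α) * ∫ s in (0 : ℝ)..t, (t - s) ^ (α - 1) * f s (z s))) →
        ∀ t ∈ Set.Icc 0 Tstar, z t = y t := by
  classical
  obtain ⟨hα0, hα1⟩ := hα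
  set Γ : ℝ := Real.Gamma α with hΓdef
  have hΓ : 0 < Γ := Real.Gamma_pos_of_pos hα0
  set I : Set ℝ := Set.Icc 0 Tstar with hIdef
  -- compactness of G and boundedness of f
  have hGeq : G = Set.Icc (0:ℝ) T ×ˢ Set.Icc (y₀ - K) (y₀ + K) := by
    rw [hG]; ext p
    simp only [Set.mem_setOf_eq, Set.mem_prod, Set.mem_Icc, abs_le]
    constructor
    · rintro ⟨h1, h2, h3⟩; exact ⟨h1, by linarith, by linarith⟩
    · rintro ⟨h1, h2, h3⟩; exact ⟨h1, by linarith, by linarith⟩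
  have hGcomp : IsCompact G := by
    rw [hGeq]; exact isCompact_Icc.prod isCompact_Icc
  have hMbd : ∀ p ∈ G, |f p.1 p.2| ≤ M := by
    intro p hp
    rw [hM]
    refine le_csSup ?_ ⟨p, hp, rfl⟩
    exact (hGcomp.image_of_continuousOn hf.abs).bddAbove
  have hy₀G : ((0:ℝ), y₀) ∈ G := by
    rw [hG]
    refine ⟨⟨le_rfl, hT.le⟩, ?_⟩
    simp [hK.le]
  have hMnn : 0 ≤ M := le_trans (abs_nonneg _) (hMbd _ hy₀G)
  -- Tstar facts
  have hGa1 : 0 < Real.Gamma (α + 1) := Real.Gamma_pos_of_pos (by linarith)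
  have hTsT : Tstar ≤ T := by
    rw [hTs]; split_ifs with h
    · exact le_rfl
    · exact min_le_left _ _
  have hTs0 : 0 < Tstar := by
    rw [hTs]; split_ifs with h
    · exact hT
    · have hMpos : 0 < M := lt_of_le_of_ne hMnn (Ne.symm h)
      exact lt_min hT (Real.rpow_pos_of_pos (by positivity) _)
  have hGaa : Real.Gamma (α + 1) = α * Γ := Real.Gamma_add_one hα0.ne'
  -- key smallness: M t^α / α ≤ K Γ on I
  have hKey : ∀ t : ℝ, 0 ≤ t → t ≤ Tstar → M * t ^ α / α ≤ K * Γ := by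
    intro t ht htT
    by_cases h : M = 0
    · rw [h]; simp; positivity
    · have hMpos : 0 < M := lt_of_le_of_ne hMnn (Ne.symm h)
      have htX : t ≤ (K * Real.Gamma (α + 1) / M) ^ (1 / α) := by
        rw [hTs, if_neg h] at htT
        exact le_trans htT (min_le_right _ _)
      have h2 : t ^ α ≤ K * Real.Gamma (α + 1) / M := by
        have := Real.rpow_le_rpow ht htX hα0.le
        rwa [one_div, Real.rpow_inv_rpow (by positivity) hα0.ne'] at this
      have h3 : M * t ^ α ≤ K * Real.Gamma (α + 1) := by
        rw [div_eq_mul_inv] at h2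
        calc M * t ^ α ≤ M * (K * Real.Gamma (α + 1) * M⁻¹) :=
              mul_le_mul_of_nonneg_left h2 hMnn
          _ = K * Real.Gamma (α + 1) := by field_simp
      rw [hGaa] at h3
      rw [div_le_iff₀ hα0]
      nlinarith
  -- the clamp
  set cl : ℝ → ℝ := fun v => y₀ + max (-K) (min K (v - y₀)) with hcldef
  have hcl1 : ∀ v, |cl v - y₀| ≤ K := by
    intro v
    rw [hcldef]
    simp only [add_sub_cancel_left]
    rw [abs_le]
    constructor
    · exact le_max_left _ _
    · exact max_le (by linarith) (min_le_left _ _)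
  have hcl2 : ∀ v, |v - y₀| ≤ K → cl v = v := by
    intro v hv
    rw [abs_le] at hv
    rw [hcldef]
    simp only
    rw [min_eq_right hv.2, max_eq_right hv.1]
    ring
  have hcl3 : ∀ a b, |cl a - cl b| ≤ |a - b| := by
    intro a b
    rw [hcldef]
    simp only [add_sub_add_left_eq_sub]
    refine le_trans (abs_max_sub_max_le_max _ _ _ _) ?_
    simp only [sub_self, abs_zero]
    refine max_le (by positivity) ?_
    refine le_trans (abs_min_sub_min_le_max _ _ _ _) ?_
    simp only [sub_self, abs_zero, add_sub_add_right_eq_sub]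
    have heq : a - y₀ - (b - y₀) = a - b := by ring
    rw [heq]
    exact max_le (abs_nonneg _) le_rfl
  have hclcont : Continuous cl := by
    rw [hcldef]; fun_prop
  -- membership of clamped points
  have hmemG : ∀ s v : ℝ, 0 ≤ s → s ≤ Tstar → (s, cl v) ∈ G := by
    intro s v hs hsT
    rw [hG]
    exact ⟨⟨hs, le_trans hsT hTsT⟩, hcl1 v⟩
  -- continuity and boundedness of s ↦ f s (cl (w s))
  have hgcont : ∀ w : ℝ → ℝ, ContinuousOn w I → ContinuousOn (fun s => f s (cl (w s))) I := by
    intro w hw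
    have hpair : ContinuousOn (fun s => (s, cl (w s))) I :=
      continuousOn_id.prodMk (hclcont.comp_continuousOn hw)
    exact hf.comp hpair (fun s hs => hmemG s (w s) hs.1 hs.2)
  have hgbd : ∀ (w : ℝ → ℝ) (s : ℝ), 0 ≤ s → s ≤ Tstar → |f s (cl (w s))| ≤ M := by
    intro w s hs hsT
    exact hMbd (s, cl (w s)) (hmemG s (w s) hs hsT)
  -- the Picard operator
  set P : (ℝ → ℝ) → ℝ → ℝ :=
    fun w t => y₀ + (1 / Γ) * ∫ s in (0:ℝ)..t, (t - s) ^ (α - 1) * f s (cl (w s)) with hPdef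
  have hPcont : ∀ w : ℝ → ℝ, ContinuousOn w I → ContinuousOn (P w) I := by
    intro w hw
    have := frac_cont hα0 hα1 hMnn (hgcont w hw)
      (fun s hs => hgbd w s hs.1 hs.2)
    rw [hPdef]
    exact continuousOn_const.add (continuousOn_const.mul this)
  have hball : ∀ (w : ℝ → ℝ) (t : ℝ), 0 ≤ t → t ≤ Tstar → |P w t - y₀| ≤ K := by
    intro w t ht htT
    have h1 : |∫ s in (0:ℝ)..t, (t - s) ^ (α - 1) * f s (cl (w s))| ≤ M * (t - 0) ^ α / α :=
      const_bound hα0 ht hMnn (fun s hs => hgbd w s hs.1.le (le_trans hs.2.le htT))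
    rw [sub_zero] at h1
    have h2 := hKey t ht htT
    rw [hPdef]
    simp only [add_sub_cancel_left]
    rw [abs_mul, abs_of_pos (by positivity : (0:ℝ) < 1 / Γ)]
    calc 1 / Γ * |∫ s in (0:ℝ)..t, (t - s) ^ (α - 1) * f s (cl (w s))|
        ≤ 1 / Γ * (M * t ^ α / α) := mul_le_mul_of_nonneg_left h1 (by positivity)
      _ ≤ 1 / Γ * (K * Γ) := mul_le_mul_of_nonneg_left h2 (by positivity)
      _ = K := by field_simp
  -- Bielecki parameters
  set δ : ℝ := (α * Γ / (4 * L)) ^ (1 / α) with hδdef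
  have hδpos : 0 < δ := Real.rpow_pos_of_pos (by positivity) _
  have hδα : δ ^ α = α * Γ / (4 * L) := by
    rw [hδdef, one_div, Real.rpow_inv_rpow (by positivity) hα0.ne']
  have hδ4 : L * (δ ^ α / α) = Γ / 4 := by
    rw [hδα]; field_simp
  obtain ⟨lam, hlam0, hlam⟩ :
      ∃ l : ℝ, 0 ≤ l ∧ L * Tstar * δ ^ (α - 1) * Real.exp (-(l * δ)) < Γ / 4 := by
    have h1 : Filter.Tendsto (fun l : ℝ => l * δ) Filter.atTop Filter.atTop :=
      Filter.Tendsto.atTop_mul_const hδpos Filter.tendsto_id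
    have h2 : Filter.Tendsto (fun l : ℝ => Real.exp (-(l * δ))) Filter.atTop (nhds 0) :=
      Real.tendsto_exp_neg_atTop_nhds_zero.comp h1
    have h3 : Filter.Tendsto
        (fun l : ℝ => L * Tstar * δ ^ (α - 1) * Real.exp (-(l * δ)))
        Filter.atTop (nhds 0) := by
      have := h2.const_mul (L * Tstar * δ ^ (α - 1))
      simpa [mul_assoc] using this
    have h4 : ∀ᶠ l : ℝ in Filter.atTop,
        L * Tstar * δ ^ (α - 1) * Real.exp (-(l * δ)) < Γ / 4 :=
      h3.eventually (gt_mem_nhds (by positivity))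
    exact ((Filter.eventually_ge_atTop (0:ℝ)).and h4).exists
  set B : ℝ := δ ^ α / α + Tstar * δ ^ (α - 1) * Real.exp (-(lam * δ)) with hBdef
  have hLB : L * B ≤ Γ / 2 := by
    have h1 : L * B = Γ / 4 + L * Tstar * δ ^ (α - 1) * Real.exp (-(lam * δ)) := by
      rw [hBdef, mul_add, hδ4]; ring
    linarith [hlam]
  -- the contraction estimate with exponential weight
  have hcontr : ∀ u v : ℝ → ℝ, ContinuousOn u I → ContinuousOn v I → ∀ c : ℝ, 0 ≤ c →
      (∀ s ∈ I, |u s - v s| ≤ c * Real.exp (lam * s)) → ∀ t ∈ I,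
      |P u t - P v t| ≤ 1 / 2 * (c * Real.exp (lam * t)) := by
    intro u v hu hv c hc hb t ht
    obtain ⟨h0t, htT'⟩ := ht
    have hsub : Set.uIcc (0:ℝ) t ⊆ I := by
      rw [Set.uIcc_of_le h0t, hIdef]; exact Set.Icc_subset_Icc le_rfl htT'
    have hgu : ContinuousOn (fun s => f s (cl (u s))) I := hgcont u hu
    have hgv : ContinuousOn (fun s => f s (cl (v s))) I := hgcont v hv
    have hiu : IntervalIntegrable (fun s => (t - s) ^ (α - 1) * f s (cl (u s))) volume 0 t :=
      kg_int hα0 (hgu.mono hsub)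
    have hiv : IntervalIntegrable (fun s => (t - s) ^ (α - 1) * f s (cl (v s))) volume 0 t :=
      kg_int hα0 (hgv.mono hsub)
    have hPsub : P u t - P v t =
        (1 / Γ) * ∫ s in (0:ℝ)..t, (t - s) ^ (α - 1) * (f s (cl (u s)) - f s (cl (v s))) := by
      have hcongr : (∫ s in (0:ℝ)..t, (t - s) ^ (α - 1) * (f s (cl (u s)) - f s (cl (v s)))) =
          ∫ s in (0:ℝ)..t,
            ((t - s) ^ (α - 1) * f s (cl (u s)) - (t - s) ^ (α - 1) * f s (cl (v s))) :=
        intervalIntegral.integral_congr (fun s _ => by ring)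
      rw [hcongr, intervalIntegral.integral_sub hiu hiv, hPdef]
      ring
    have hbound : |∫ s in (0:ℝ)..t, (t - s) ^ (α - 1) * (f s (cl (u s)) - f s (cl (v s)))| ≤
        ∫ s in (0:ℝ)..t, (t - s) ^ (α - 1) * (L * c * Real.exp (lam * s)) := by
      refine wt_bound hα0 h0t ?_ (fun s _ => by positivity) (kg_int hα0 (by fun_prop))
      intro s hs
      have hsI : s ∈ I := ⟨hs.1.le, hs.2.le.trans htT'⟩
      have hm1 : (s, cl (u s)) ∈ G := hmemG s (u s) hs.1.le (hs.2.le.trans htT')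
      have hm2 : (s, cl (v s)) ∈ G := hmemG s (v s) hs.1.le (hs.2.le.trans htT')
      calc |f s (cl (u s)) - f s (cl (v s))| ≤ L * |cl (u s) - cl (v s)| := hlip s _ _ hm1 hm2
        _ ≤ L * |u s - v s| := mul_le_mul_of_nonneg_left (hcl3 _ _) hL.le
        _ ≤ L * (c * Real.exp (lam * s)) := mul_le_mul_of_nonneg_left (hb s hsI) hL.le
        _ = L * c * Real.exp (lam * s) := by ring
    have heq2 : (∫ s in (0:ℝ)..t, (t - s) ^ (α - 1) * (L * c * Real.exp (lam * s))) =
        L * c * ∫ s in (0:ℝ)..t, (t - s) ^ (α - 1) * Real.exp (lam * s) := by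
      rw [← intervalIntegral.integral_const_mul]
      exact intervalIntegral.integral_congr (fun s _ => by ring)
    have hbiel := biel hα0 hα1 hδpos hlam0 h0t htT' (Tb := Tstar) (δ := δ)
    have hchain : |∫ s in (0:ℝ)..t, (t - s) ^ (α - 1) * (f s (cl (u s)) - f s (cl (v s)))| ≤
        L * c * (B * Real.exp (lam * t)) := by
      refine hbound.trans ?_
      rw [heq2]
      exact mul_le_mul_of_nonneg_left (hbiel.trans (le_of_eq (by rw [hBdef])))
        (by positivity)
    rw [hPsub, abs_mul, abs_of_pos (by positivity : (0:ℝ) < 1 / Γ)]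
    have h6 : L * c * (B * Real.exp (lam * t)) =
        c * Real.exp (lam * t) * (L * B) := by ring
    have h7 : c * Real.exp (lam * t) * (L * B) ≤ c * Real.exp (lam * t) * (Γ / 2) :=
      mul_le_mul_of_nonneg_left hLB (by positivity)
    calc 1 / Γ * |∫ s in (0:ℝ)..t, (t - s) ^ (α - 1) * (f s (cl (u s)) - f s (cl (v s)))|
        ≤ 1 / Γ * (c * Real.exp (lam * t) * (Γ / 2)) := by
          refine mul_le_mul_of_nonneg_left (hchain.trans ?_) (by positivity)
          rw [h6]; exact h7
      _ = 1 / 2 * (c * Real.exp (lam * t)) := by field_simp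
  -- plain sup-norm difference estimate (used for passing to the limit)
  have hPdiffc : ∀ u v : ℝ → ℝ, ContinuousOn u I → ContinuousOn v I → ∀ c : ℝ, 0 ≤ c →
      (∀ s ∈ I, |u s - v s| ≤ c) → ∀ t ∈ I,
      |P u t - P v t| ≤ 1 / Γ * (L * c * t ^ α / α) := by
    intro u v hu hv c hc hb t ht
    obtain ⟨h0t, htT'⟩ := ht
    have hsub : Set.uIcc (0:ℝ) t ⊆ I := by
      rw [Set.uIcc_of_le h0t, hIdef]; exact Set.Icc_subset_Icc le_rfl htT'
    have hiu : IntervalIntegrable (fun s => (t - s) ^ (α - 1) * f s (cl (u s))) volume 0 t :=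
      kg_int hα0 ((hgcont u hu).mono hsub)
    have hiv : IntervalIntegrable (fun s => (t - s) ^ (α - 1) * f s (cl (v s))) volume 0 t :=
      kg_int hα0 ((hgcont v hv).mono hsub)
    have hPsub : P u t - P v t =
        (1 / Γ) * ∫ s in (0:ℝ)..t, (t - s) ^ (α - 1) * (f s (cl (u s)) - f s (cl (v s))) := by
      have hcongr : (∫ s in (0:ℝ)..t, (t - s) ^ (α - 1) * (f s (cl (u s)) - f s (cl (v s)))) =
          ∫ s in (0:ℝ)..t,
            ((t - s) ^ (α - 1) * f s (cl (u s)) - (t - s) ^ (α - 1) * f s (cl (v s))) :=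
        intervalIntegral.integral_congr (fun s _ => by ring)
      rw [hcongr, intervalIntegral.integral_sub hiu hiv, hPdef]
      ring
    have hbound : |∫ s in (0:ℝ)..t, (t - s) ^ (α - 1) * (f s (cl (u s)) - f s (cl (v s)))| ≤
        L * c * (t - 0) ^ α / α := by
      refine const_bound hα0 h0t (by positivity) ?_
      intro s hs
      have hsI : s ∈ I := ⟨hs.1.le, hs.2.le.trans htT'⟩
      have hm1 : (s, cl (u s)) ∈ G := hmemG s (u s) hs.1.le (hs.2.le.trans htT')
      have hm2 : (s, cl (v s)) ∈ G := hmemG s (v s) hs.1.le (hs.2.le.trans htT')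
      calc |f s (cl (u s)) - f s (cl (v s))| ≤ L * |cl (u s) - cl (v s)| := hlip s _ _ hm1 hm2
        _ ≤ L * |u s - v s| := mul_le_mul_of_nonneg_left (hcl3 _ _) hL.le
        _ ≤ L * c := mul_le_mul_of_nonneg_left (hb s hsI) hL.le
    rw [sub_zero] at hbound
    rw [hPsub, abs_mul, abs_of_pos (by positivity : (0:ℝ) < 1 / Γ)]
    exact mul_le_mul_of_nonneg_left hbound (by positivity)
  -- Picard iterates
  set u : ℕ → ℝ → ℝ := fun n => P^[n] (fun _ => y₀) with hudef
  have husucc : ∀ n, u (n + 1) = P (u n) := by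
    intro n; exact Function.iterate_succ_apply' P n _
  have hu0 : u 0 = fun _ => y₀ := rfl
  have hucont : ∀ n, ContinuousOn (u n) I := by
    intro n
    induction n with
    | zero => exact continuousOn_const
    | succ n ih => rw [husucc n]; exact hPcont (u n) ih
  have huball : ∀ n, ∀ t : ℝ, 0 ≤ t → t ≤ Tstar → |u n t - y₀| ≤ K := by
    intro n t ht htT
    cases n with
    | zero => simp [hu0]; linarith
    | succ n => rw [husucc n]; exact hball (u n) t ht htT
  have hiter : ∀ n, ∀ t ∈ I, |u (n + 1) t - u n t| ≤ K * (1/2) ^ n * Real.exp (lam * t) := by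
    intro n
    induction n with
    | zero =>
      intro t ht
      have h1 : |u 1 t - u 0 t| ≤ K := by
        rw [husucc 0, hu0]; exact hball _ t ht.1 ht.2
      have h2 : (1:ℝ) ≤ Real.exp (lam * t) :=
        Real.one_le_exp (mul_nonneg hlam0 ht.1)
      calc |u 1 t - u 0 t| ≤ K := h1
        _ = K * (1/2) ^ 0 * 1 := by ring
        _ ≤ K * (1/2) ^ 0 * Real.exp (lam * t) :=
            mul_le_mul_of_nonneg_left h2 (by positivity)
    | succ n ih =>
      intro t ht
      have e1 : u (n+1+1) t = P (u (n+1)) t := by rw [husucc (n+1)]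
      have e2 : u (n+1) t = P (u n) t := by rw [husucc n]
      have h := hcontr (u (n+1)) (u n) (hucont (n+1)) (hucont n) (K * (1/2) ^ n)
        (by positivity) (fun s hs => ih s hs) t ht
      rw [e1, e2]
      calc |P (u (n+1)) t - P (u n) t| ≤ 1/2 * (K * (1/2) ^ n * Real.exp (lam * t)) := h
        _ = K * (1/2) ^ (n+1) * Real.exp (lam * t) := by ring
  -- telescoping estimate
  set E : ℝ := K * Real.exp (lam * Tstar) with hEdef
  have hE0 : 0 < E := by rw [hEdef]; positivity
  have hexpT : ∀ t ∈ I, Real.exp (lam * t) ≤ Real.exp (lam * Tstar) := by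
    intro t ht
    exact Real.exp_le_exp.2 (mul_le_mul_of_nonneg_left ht.2 hlam0)
  have hiter' : ∀ n, ∀ t ∈ I, |u (n + 1) t - u n t| ≤ E * (1/2) ^ n := by
    intro n t ht
    calc |u (n + 1) t - u n t| ≤ K * (1/2) ^ n * Real.exp (lam * t) := hiter n t ht
      _ ≤ K * (1/2) ^ n * Real.exp (lam * Tstar) :=
          mul_le_mul_of_nonneg_left (hexpT t ht) (by positivity)
      _ = E * (1/2) ^ n := by rw [hEdef]; ring
  have htel : ∀ n m, ∀ t ∈ I, |u (n + m) t - u n t| ≤ 2 * E * (1/2) ^ n := by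
    have haux : ∀ m n, ∀ t ∈ I,
        |u (n + m) t - u n t| ≤ 2 * E * (1/2) ^ n - 2 * E * (1/2) ^ (n + m) := by
      intro m
      induction m with
      | zero => intro n t ht; simp
      | succ m ih =>
        intro n t ht
        have h1 : |u (n + (m+1)) t - u n t| ≤
            |u (n + m + 1) t - u (n + m) t| + |u (n + m) t - u n t| := by
          have : n + (m + 1) = n + m + 1 := by ring
          rw [this]
          exact abs_sub_le _ _ _
        refine h1.trans ?_
        have h2 := hiter' (n + m) t ht
        have h3 := ih n t ht
        have h4 : 2 * E * (1/2) ^ (n + m) - 2 * E * (1/2) ^ (n + (m+1)) =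
            E * (1/2) ^ (n + m) := by ring
        have h5 : (2 * E * (1/2) ^ n - 2 * E * (1/2) ^ (n + (m+1))) =
            E * (1/2) ^ (n + m) + (2 * E * (1/2) ^ n - 2 * E * (1/2) ^ (n + m)) := by ring
        rw [h5]
        exact add_le_add h2 h3
    intro n m t ht
    refine (haux m n t ht).trans ?_
    have : (0:ℝ) ≤ 2 * E * (1/2) ^ (n + m) := by positivity
    linarith
  -- pointwise limits exist
  have hcau : ∀ t ∈ I, ∃ l : ℝ, Filter.Tendsto (fun n => u n t) Filter.atTop (nhds l) := by
    intro t ht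
    have hcs : CauchySeq (fun n => u n t) := by
      refine cauchySeq_of_le_geometric (1/2) E (by norm_num) ?_
      intro n
      rw [Real.dist_eq, abs_sub_comm]
      exact hiter' n t ht
    exact cauchySeq_tendsto_of_complete hcs
  set y : ℝ → ℝ := fun t => limUnder Filter.atTop (fun n => u n t) with hydef
  have hylim : ∀ t ∈ I, Filter.Tendsto (fun n => u n t) Filter.atTop (nhds (y t)) := by
    intro t ht
    obtain ⟨l, hl⟩ := hcau t ht
    rw [hydef]
    simp only
    rw [hl.limUnder_eq]
    exact hl
  -- uniform convergence
  have hUC : UniformCauchySeqOn u Filter.atTop I := by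
    rw [Metric.uniformCauchySeqOn_iff]
    intro ε hε
    obtain ⟨N, hN⟩ : ∃ N : ℕ, 2 * E * (1/2) ^ N < ε := by
      have h1 : Filter.Tendsto (fun n : ℕ => 2 * E * (1/2 : ℝ) ^ n) Filter.atTop (nhds 0) := by
        have := tendsto_pow_atTop_nhds_zero_of_lt_one (by norm_num : (0:ℝ) ≤ 1/2)
          (by norm_num : (1/2 : ℝ) < 1)
        simpa using this.const_mul (2 * E)
      exact (h1.eventually (gt_mem_nhds hε)).exists
    refine ⟨N, fun m hm n hn x hx => ?_⟩
    have hkey : ∀ a b : ℕ, a ≤ b → N ≤ a → dist (u a x) (u b x) < ε := by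
      intro a b hab hNa
      rw [Real.dist_eq, abs_sub_comm]
      have hb' : b = a + (b - a) := by omega
      rw [hb']
      refine lt_of_le_of_lt ((htel a (b - a) x hx).trans ?_) hN
      have : ((1:ℝ)/2) ^ a ≤ (1/2) ^ N :=
        pow_le_pow_of_le_one (by norm_num) (by norm_num) hNa
      nlinarith [hE0]
    rcases le_total m n with h | h
    · exact hkey m n h hm
    · rw [dist_comm]; exact hkey n m h hn
  have hTU : TendstoUniformlyOn u y Filter.atTop I :=
    hUC.tendstoUniformlyOn_of_tendsto hylim
  have hycont : ContinuousOn y I :=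
    hTU.continuousOn (Filter.Eventually.of_forall hucont).frequently
  have hyball : ∀ t ∈ I, |y t - y₀| ≤ K := by
    intro t ht
    have h1 : Filter.Tendsto (fun n => |u n t - y₀|) Filter.atTop (nhds (|y t - y₀|)) :=
      ((hylim t ht).sub tendsto_const_nhds).abs
    exact le_of_tendsto' h1 (fun n => huball n t ht.1 ht.2)
  -- fixed point property
  have hyfix : ∀ t ∈ I, y t = P y t := by
    intro t ht
    have h1 : Filter.Tendsto (fun n => u (n + 1) t) Filter.atTop (nhds (y t)) :=
      (hylim t ht).comp (Filter.tendsto_add_atTop_nat 1)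
    have h2 : Filter.Tendsto (fun n => u (n + 1) t) Filter.atTop (nhds (P y t)) := by
      rw [Metric.tendsto_atTop]
      intro ε hε
      have hT1 : (0:ℝ) < Tstar ^ α := Real.rpow_pos_of_pos hTs0 _
      set c0 : ℝ := 1 / Γ * (L * Tstar ^ α / α) + 1 with hc0def
      have hc00 : 0 < c0 := by rw [hc0def]; positivity
      set ε' : ℝ := ε / (2 * c0) with hε'def
      have hε'0 : 0 < ε' := by rw [hε'def]; positivity
      have h3 := hTU
      rw [Metric.tendstoUniformlyOn_iff] at h3
      obtain ⟨N, hN⟩ := ((h3 ε' hε'0).and (Filter.eventually_ge_atTop 0)).exists_forall_of_atTop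
      refine ⟨N, fun n hn => ?_⟩
      have hbnd : ∀ s ∈ I, |u n s - y s| ≤ ε' := by
        intro s hs
        have := (hN n hn).1 s hs
        rw [Real.dist_eq, abs_sub_comm] at this
        exact this.le
      have h4 := hPdiffc (u n) y (hucont n) hycont ε' hε'0.le hbnd t ht
      rw [husucc n, Real.dist_eq]
      refine lt_of_le_of_lt h4 ?_
      have htα : t ^ α ≤ Tstar ^ α := Real.rpow_le_rpow ht.1 ht.2 hα0.le
      have hb2 : 1 / Γ * (L * t ^ α / α) ≤ 1 / Γ * (L * Tstar ^ α / α) := by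
        have h := mul_le_mul_of_nonneg_left htα
          (le_of_lt (show (0:ℝ) < L / (Γ * α) by positivity))
        calc 1 / Γ * (L * t ^ α / α) = L / (Γ * α) * t ^ α := by ring
          _ ≤ L / (Γ * α) * Tstar ^ α := h
          _ = 1 / Γ * (L * Tstar ^ α / α) := by ring
      have hb3 : 1 / Γ * (L * t ^ α / α) ≤ c0 := by rw [hc0def]; linarith
      calc 1 / Γ * (L * ε' * t ^ α / α) = ε' * (1 / Γ * (L * t ^ α / α)) := by ring
        _ ≤ ε' * c0 := mul_le_mul_of_nonneg_left hb3 hε'0.le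
        _ = ε / 2 := by rw [hε'def]; field_simp
        _ < ε := by linarith
    exact tendsto_nhds_unique h1 h2
  -- clamp removal on solutions within the ball
  have hclamp_eq : ∀ w : ℝ → ℝ, (∀ s ∈ I, |w s - y₀| ≤ K) → ∀ t ∈ I,
      P w t = y₀ + (1 / Γ) * ∫ s in (0:ℝ)..t, (t - s) ^ (α - 1) * f s (w s) := by
    intro w hw t ht
    have hint_eq : (∫ s in (0:ℝ)..t, (t - s) ^ (α - 1) * f s (cl (w s))) =
        ∫ s in (0:ℝ)..t, (t - s) ^ (α - 1) * f s (w s) := by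
      refine intervalIntegral.integral_congr ?_
      intro s hs
      rw [Set.uIcc_of_le ht.1] at hs
      have hsI : s ∈ I := ⟨hs.1, hs.2.trans ht.2⟩
      simp only
      rw [hcl2 (w s) (hw s hsI)]
    rw [hPdef]
    simp only
    rw [hint_eq]
  refine ⟨y, ⟨hycont, hyball, ?_⟩, ?_⟩
  · intro t ht
    exact (hyfix t ht).trans (hclamp_eq y hyball t ht)
  · -- uniqueness
    rintro z ⟨hzc, hzb, hze⟩ t ht
    have hzfix : ∀ t ∈ I, z t = P z t := by
      intro t ht
      exact (hze t ht).trans (hclamp_eq z hzb t ht).symm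
    have hdzy : ∀ n, ∀ t ∈ I, |z t - y t| ≤ 2 * K * (1/2) ^ n * Real.exp (lam * t) := by
      intro n
      induction n with
      | zero =>
        intro t ht
        have h1 : |z t - y t| ≤ |z t - y₀| + |y t - y₀| := by
          have := abs_sub_le (z t) y₀ (y t)
          rwa [abs_sub_comm y₀ (y t)] at this
        have h2 : (1:ℝ) ≤ Real.exp (lam * t) := Real.one_le_exp (mul_nonneg hlam0 ht.1)
        have h3 := hzb t ht
        have h4 := hyball t ht
        have h5 : |z t - y t| ≤ 2 * K := by linarith
        calc |z t - y t| ≤ 2 * K := h5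
          _ = 2 * K * (1/2) ^ 0 * 1 := by ring
          _ ≤ 2 * K * (1/2) ^ 0 * Real.exp (lam * t) :=
              mul_le_mul_of_nonneg_left h2 (by positivity)
      | succ n ih =>
        intro t ht
        rw [hzfix t ht, hyfix t ht]
        have h := hcontr z y hzc hycont (2 * K * (1/2) ^ n) (by positivity)
          (fun s hs => ih s hs) t ht
        calc |P z t - P y t| ≤ 1/2 * (2 * K * (1/2) ^ n * Real.exp (lam * t)) := h
          _ = 2 * K * (1/2) ^ (n+1) * Real.exp (lam * t) := by ring
    have hlim0 : Filter.Tendsto (fun n : ℕ => 2 * K * (1/2 : ℝ) ^ n * Real.exp (lam * t))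
        Filter.atTop (nhds 0) := by
      have h1 := tendsto_pow_atTop_nhds_zero_of_lt_one (by norm_num : (0:ℝ) ≤ 1/2)
        (by norm_num : (1/2 : ℝ) < 1)
      have := (h1.const_mul (2 * K)).mul_const (Real.exp (lam * t))
      simpa using this
    have hle0 : |z t - y t| ≤ 0 :=
      ge_of_tendsto' hlim0 (fun n => hdzy n t ht)
    have := abs_nonpos_iff.mp hle0
    linarith [sub_eq_zero.mp this, le_of_eq (sub_eq_zero.mp this)]
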